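/- Let ε > 0 and let X, Y be finite sets with probability mass functions p, q of full support. For fixed functions u : X → ℝ, v : Y → ℝ and cost c : X×Y → ℝ, define H(x,y) = (1/(2ε))·(u(x) + v(y) − c(x,y))₊ and π(x,y) = H(x,y)p(x)q(y). Then π is the unique minimizer over nonnegative functions ρ on X×Y of the functional G(ρ) = Σ_{x,y} c(x,y)ρ(x,y) + ε Σ_{x,y} ρ(x,y)²/(p(x)q(y)) − Σ_x u(x) Σ_y ρ(x,y) − Σ_y v(y) Σ_x ρ(x,y) (i.e., the Lagrangian of L2-regularized OT with multipliers −u, −v, ignoring constant terms). -/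

import Mathlib

open Finset

/-- Pointwise key lemma: if `2*a*s = max b 0` with `a > 0`, then `s` minimizes
`t ↦ a*t^2 - b*t` over `t ≥ 0`, strictly. -/
lemma stmt17_key (a b s t : ℝ) (ha : 0 < a) (hs : 2 * a * s = max b 0)
    (ht : 0 ≤ t) :
    a * s ^ 2 - b * s ≤ a * t ^ 2 - b * t ∧
      (a * t ^ 2 - b * t = a * s ^ 2 - b * s → t = s) := by
  rcases le_or_gt b 0 with hb | hb
  · have hmax : max b 0 = 0 := max_eq_right hb
    have hs0 : s = 0 := by
      have := hs.trans hmax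
      nlinarith
    subst hs0
    constructor
    · nlinarith
    · intro h
      by_contra hne
      have htpos : 0 < t := lt_of_le_of_ne ht (Ne.symm hne)
      nlinarith [mul_pos ha (pow_pos htpos 2), mul_nonneg (neg_nonneg.mpr hb) ht]
  · have hmax : max b 0 = b := max_eq_left hb.le
    rw [hmax] at hs
    subst hs
    constructor
    · nlinarith [mul_nonneg ha.le (sq_nonneg (t - s))]
    · intro h
      by_contra hne
      have h2 : (0:ℝ) < (t - s) ^ 2 :=
        (sq_nonneg _).lt_of_ne (Ne.symm (pow_ne_zero 2 (sub_ne_zero.mpr hne)))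
      nlinarith [mul_pos ha h2]

theorem stmt17 {X Y : Type*} [Fintype X] [Fintype Y]
    (p : X → ℝ) (q : Y → ℝ) (hp : ∀ x, 0 < p x) (hq : ∀ y, 0 < q y)
    (ε : ℝ) (hε : 0 < ε) (u : X → ℝ) (v : Y → ℝ) (c : X → Y → ℝ)
    (H : X → Y → ℝ) (hH : ∀ x y, H x y = (1 / (2 * ε)) * max (u x + v y - c x y) 0)
    (π : X → Y → ℝ) (hπ : ∀ x y, π x y = H x y * p x * q y)
    (G : (X → Y → ℝ) → ℝ)
    (hG : ∀ ρ, G ρ = ∑ x, ∑ y, c x y * ρ x y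
      + ε * ∑ x, ∑ y, ρ x y ^ 2 / (p x * q y)
      - ∑ x, u x * ∑ y, ρ x y - ∑ y, v y * ∑ x, ρ x y) :
    (∀ x y, 0 ≤ π x y) ∧
      ∀ ρ : X → Y → ℝ, (∀ x y, 0 ≤ ρ x y) →
        G π ≤ G ρ ∧ (G ρ = G π → ρ = π) := by
  have hπ0 : ∀ x y, 0 ≤ π x y := by
    intro x y
    rw [hπ, hH]
    have h1 : (0:ℝ) ≤ 1 / (2 * ε) := by positivity
    
    exact mul_nonneg (mul_nonneg (mul_nonneg h1 (le_max_right _ _)) (hp x).le) (hq y).le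
  -- rewrite G as a sum over the product type
  have Grw : ∀ ρ : X → Y → ℝ, G ρ = ∑ z : X × Y,
      (ε / (p z.1 * q z.2) * (ρ z.1 z.2) ^ 2
        - (u z.1 + v z.2 - c z.1 z.2) * ρ z.1 z.2) := by
    intro ρ
    rw [hG, Fintype.sum_prod_type]
    rw [show (∑ y, v y * ∑ x, ρ x y) = ∑ x, ∑ y, v y * ρ x y by
      simp only [Finset.mul_sum]; exact Finset.sum_comm]
    simp only [Finset.mul_sum, ← Finset.sum_sub_distrib, ← Finset.sum_add_distrib]
    refine Finset.sum_congr rfl fun x _ => Finset.sum_congr rfl fun y _ => ?_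
    have hpq : p x * q y ≠ 0 := (mul_pos (hp x) (hq y)).ne'
    field_simp
    ring
  -- per-point key fact
  have hkey : ∀ (x : X) (y : Y) (t : ℝ), 0 ≤ t →
      (ε / (p x * q y) * (π x y) ^ 2 - (u x + v y - c x y) * π x y
        ≤ ε / (p x * q y) * t ^ 2 - (u x + v y - c x y) * t) ∧
      (ε / (p x * q y) * t ^ 2 - (u x + v y - c x y) * t
        = ε / (p x * q y) * (π x y) ^ 2 - (u x + v y - c x y) * π x y → t = π x y) := by
    intro x y t ht
    have ha : 0 < ε / (p x * q y) := div_pos hε (mul_pos (hp x) (hq y))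
    have hs : 2 * (ε / (p x * q y)) * π x y = max (u x + v y - c x y) 0 := by
      rw [hπ, hH]
      have hε' : ε ≠ 0 := hε.ne'
      have hp' : p x ≠ 0 := (hp x).ne'
      have hq' : q y ≠ 0 := (hq y).ne'
      field_simp
    exact stmt17_key _ _ _ _ ha hs ht
  refine ⟨hπ0, fun ρ hρ => ?_⟩
  have hle : ∀ z : X × Y, z ∈ (Finset.univ : Finset (X × Y)) →
      (ε / (p z.1 * q z.2) * (π z.1 z.2) ^ 2 - (u z.1 + v z.2 - c z.1 z.2) * π z.1 z.2)
        ≤ (ε / (p z.1 * q z.2) * (ρ z.1 z.2) ^ 2 - (u z.1 + v z.2 - c z.1 z.2) * ρ z.1 z.2) :=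
    fun z _ => (hkey z.1 z.2 _ (hρ z.1 z.2)).1
  constructor
  · rw [Grw, Grw]
    exact Finset.sum_le_sum hle
  · intro heq
    rw [Grw, Grw] at heq
    have := (Finset.sum_eq_sum_iff_of_le hle).mp heq.symm
    funext x y
    exact (hkey x y _ (hρ x y)).2 ((this (x, y) (Finset.mem_univ _)).symm)
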